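/- Let n be a natural number, let E = EuclideanSpace ℝ (Fin n), and let C ⊆ E be a nonempty closed set. Then the map x ↦ Metric.infNndist x C, from E to the nonnegative reals ℝ≥0 (with the metric dist a b = |a − b|), is a submetry if and only if C is convex (Convex ℝ C) and C has empty interior. -/

import Mathlib

open Metric NNReal

set_option linter.unusedSectionVars false

section Aux

variable {E : Type*} [NormedAddCommGroup E] [InnerProductSpace ℝ E]

private lemma combo_sq (y a b : E) {α β : ℝ} (h : α + β = 1) :
    ‖y - (α•a + β•b)‖^2 = α*‖y-a‖^2 + β*‖y-b‖^2 - α*β*‖a-b‖^2 := by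
  have hm : y - (α•a + β•b) = α•(y-a) + β•(y-b) := by
    match_scalars <;> linarith
  have hab : a - b = (y - b) - (y - a) := by abel
  have h2 := norm_sub_sq_real (y-b) (y-a)
  rw [hm, hab, norm_add_sq_real, h2, norm_smul, norm_smul,
    real_inner_smul_left, real_inner_smul_right, mul_pow, mul_pow,
    Real.norm_eq_abs, Real.norm_eq_abs, sq_abs, sq_abs,
    real_inner_comm (y-b) (y-a)]
  linear_combination (α*‖y-a‖^2 + β*‖y-b‖^2) * h

private lemma le_infDist' {C : Set E} (hne : C.Nonempty) {y : E} {b : ℝ}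
    (h : ∀ c ∈ C, b ≤ dist y c) : b ≤ infDist y C :=
  le_of_not_gt fun hlt => by
    obtain ⟨c, hc, hd⟩ := (infDist_lt_iff hne).mp hlt
    exact (h c hc).not_gt hd

variable [FiniteDimensional ℝ E]

private lemma down_lem {C : Set E} (hC : IsClosed C) (hne : C.Nonempty) (x : E) {v : ℝ}
    (hv0 : 0 ≤ v) (hvD : v ≤ infDist x C) :
    ∃ y, dist x y = infDist x C - v ∧ infDist y C = v := by
  obtain ⟨p, hp, hpd⟩ := hC.exists_infDist_eq_dist hne x
  rcases eq_or_lt_of_le (infDist_nonneg : (0:ℝ) ≤ infDist x C) with h0 | h0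
  · have hv : v = 0 := le_antisymm (hvD.trans h0.symm.le) hv0
    exact ⟨x, by simp [hv, ← h0], by rw [hv, ← h0]⟩
  · have hq : (0:ℝ) ≤ (infDist x C - v)/(infDist x C) := div_nonneg (by linarith) h0.le
    set y := x + ((infDist x C - v)/(infDist x C)) • (p - x) with hy
    have hxy : dist x y = infDist x C - v := by
      have h' : x - y = ((infDist x C - v)/(infDist x C)) • (x - p) := by
        rw [hy]; match_scalars <;> ring
      rw [dist_eq_norm, h', norm_smul, Real.norm_eq_abs, abs_of_nonneg hq,
        ← dist_eq_norm, ← hpd]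
      field_simp
    have hyp : dist y p = v := by
      have h' : y - p = (v/(infDist x C)) • (x - p) := by
        rw [hy]; match_scalars <;> field_simp <;> ring
      rw [dist_eq_norm, h', norm_smul, Real.norm_eq_abs,
        abs_of_nonneg (div_nonneg hv0 h0.le), ← dist_eq_norm, ← hpd]
      field_simp
    have hle : infDist y C ≤ v := hyp ▸ infDist_le_dist_of_mem hp
    have hge := infDist_le_infDist_add_dist (x := x) (y := y) (s := C)
    rw [hxy] at hge
    exact ⟨y, hxy, by linarith⟩

private lemma up_lem {C : Set E} (hconv : Convex ℝ C) (hC : IsClosed C) (hne : C.Nonempty)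
    (hint : interior C = ∅) (x : E) {t : ℝ} (ht : 0 ≤ t) :
    ∃ y, dist x y = t ∧ infDist y C = infDist x C + t := by
  obtain ⟨p, hp, hpd⟩ := hC.exists_infDist_eq_dist hne x
  rcases eq_or_lt_of_le (infDist_nonneg : (0:ℝ) ≤ infDist x C) with h0 | h0
  · -- x ∈ C : move orthogonally to the affine span of C
    have hx : x ∈ C := (hC.mem_iff_infDist_zero hne).mpr h0.symm
    have hspan : affineSpan ℝ C ≠ ⊤ := by
      intro h
      obtain ⟨z, hz⟩ := hconv.interior_nonempty_iff_affineSpan_eq_top.mpr h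
      simp [hint] at hz
    have hdir : (affineSpan ℝ C).direction ≠ ⊤ := by
      intro h
      exact hspan ((AffineSubspace.direction_eq_top_iff_of_nonempty
        ((hne.mono (subset_affineSpan ℝ C)))).mp h)
    have horth : ((affineSpan ℝ C).direction)ᗮ ≠ ⊥ := by
      rw [Ne, Submodule.orthogonal_eq_bot_iff]; exact hdir
    obtain ⟨ν, hν, hν0⟩ := Submodule.ne_bot_iff _ |>.mp horth
    set w := ‖ν‖⁻¹ • ν with hw
    have hw1 : ‖w‖ = 1 := norm_smul_inv_norm hν0
    have hdxy : dist x (x + t • w) = t := by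
      have h' : x - (x + t • w) = -(t • w) := by abel
      rw [dist_eq_norm, h', norm_neg, norm_smul, Real.norm_eq_abs, abs_of_nonneg ht, hw1,
        mul_one]
    refine ⟨x + t • w, hdxy, ?_⟩
    have hle : infDist (x + t • w) C ≤ t := by
      have := infDist_le_dist_of_mem (x := x + t • w) hx
      rwa [dist_comm, hdxy] at this
    have hge : t ≤ infDist (x + t • w) C := by
      refine le_infDist' hne fun c hc => ?_
      have hxc : x - c ∈ (affineSpan ℝ C).direction := by
        have := AffineSubspace.vsub_mem_direction (mem_affineSpan ℝ hx) (mem_affineSpan ℝ hc)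
        simpa using this
      have hwxc : (inner ℝ w (x - c) : ℝ) = 0 := by
        rw [hw, real_inner_smul_left, real_inner_comm,
          (Submodule.mem_orthogonal _ _).mp hν (x - c) hxc, mul_zero]
      have hyc : x + t • w - c = t • w + (x - c) := by abel
      have hsq : ‖x + t • w - c‖^2 = t^2 + ‖x - c‖^2 := by
        rw [hyc, norm_add_sq_real, real_inner_smul_left, hwxc, norm_smul, Real.norm_eq_abs,
          abs_of_nonneg ht, hw1, mul_one, mul_zero, mul_zero, add_zero]
      rw [dist_eq_norm]
      nlinarith [norm_nonneg (x + t • w - c), norm_nonneg (x - c)]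
    rw [← h0, zero_add]
    linarith
  · -- x ∉ C : move away from the projection point p
    have hD0 : (0:ℝ) < dist x p := hpd ▸ h0
    have hinner : ∀ c ∈ C, (inner ℝ (x - p) (c - p) : ℝ) ≤ 0 := by
      refine (norm_eq_iInf_iff_real_inner_le_zero hconv hp).mp ?_
      have hiInf : (⨅ w : C, ‖x - w‖) = infDist x C := by
        rw [infDist_eq_iInf]; simp_rw [dist_eq_norm]
      rw [hiInf, ← dist_eq_norm]
      exact hpd.symm
    set q : ℝ := t / dist x p with hq
    have hq0 : 0 ≤ q := div_nonneg ht hD0.le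
    set y := x + q • (x - p) with hy
    have hdxy : dist x y = t := by
      have h' : x - y = -(q • (x - p)) := by rw [hy]; abel
      rw [dist_eq_norm, h', norm_neg, norm_smul, Real.norm_eq_abs, abs_of_nonneg hq0,
        ← dist_eq_norm, hq]
      field_simp
    refine ⟨y, hdxy, ?_⟩
    have hle : infDist y C ≤ infDist x C + t := by
      have := infDist_le_infDist_add_dist (x := y) (y := x) (s := C)
      rwa [dist_comm, hdxy] at this
    have hyp : y - p = (1 + q) • (x - p) := by rw [hy]; match_scalars <;> ring
    have hnyp : ‖y - p‖ = infDist x C + t := by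
      rw [hyp, norm_smul, Real.norm_eq_abs, abs_of_nonneg (by linarith), ← dist_eq_norm, hpd,
        hq]
      field_simp
    have hge : infDist x C + t ≤ infDist y C := by
      refine le_infDist' hne fun c hc => ?_
      have hip : (inner ℝ (y - p) (c - p) : ℝ) ≤ 0 := by
        rw [hyp, real_inner_smul_left]
        exact mul_nonpos_of_nonneg_of_nonpos (by linarith) (hinner c hc)
      have hyc : y - c = (y - p) - (c - p) := by abel
      have hsq : ‖y - c‖^2 = ‖y - p‖^2 - 2 * (inner ℝ (y - p) (c - p) : ℝ) + ‖c - p‖^2 := by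
        rw [hyc, norm_sub_sq_real]
      rw [dist_eq_norm]
      nlinarith [norm_nonneg (y - c), norm_nonneg (c - p), infDist_nonneg (s := C) (x := x),
        hnyp]
    linarith

end Aux

/-- A map `P : X → Y` between metric spaces is a submetry if it maps every open
ball onto the open ball of the same radius around the image of the center. -/
def IsSubmetry {X Y : Type*} [MetricSpace X] [MetricSpace Y] (P : X → Y) : Prop :=
  ∀ (x : X) (r : ℝ), 0 < r → P '' Metric.ball x r = Metric.ball (P x) r

set_option maxHeartbeats 2000000 in
/-- For a nonempty closed set `C ⊆ ℝⁿ`, the distance function to `C` (valued in `ℝ≥0`)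
is a submetry iff `C` is convex and has empty interior. -/
theorem infNndist_isSubmetry_iff (n : ℕ) (C : Set (EuclideanSpace ℝ (Fin n)))
    (hC : IsClosed C) (hne : C.Nonempty) :
    IsSubmetry (fun x => Metric.infNndist x C) ↔ Convex ℝ C ∧ interior C = ∅ := by
  constructor
  · intro hsub
    constructor
    · -- convexity
      intro a ha b hb α β hα hβ hαβ
      by_contra hm
      set m := α • a + β • b with hmdef
      have hd' : 0 < infDist m C := (hC.notMem_iff_infDist_pos hne).mp hm
      set d := infDist m C with hddef
      set s := ‖a - b‖^2 with hsdef
      set r : ℝ := s / d + d with hrdef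
      clear_value d s r
      have hd : 0 < d := hd'
      have hs0 : (0:ℝ) ≤ s := hsdef ▸ sq_nonneg _
      have hsd : (0:ℝ) ≤ s / d := div_nonneg hs0 hd.le
      have hr : 0 < r := by rw [hrdef]; linarith
      have hrd : r * d = s + d^2 := by rw [hrdef]; field_simp
      have hdr : d ≤ r := by rw [hrdef]; linarith
      have himg := hsub m r hr
      have hv : Real.toNNReal (r + d/2) ∈ Metric.ball ((fun x => Metric.infNndist x C) m) r := by
        rw [Metric.mem_ball, NNReal.dist_eq, Metric.coe_infNndist,
          Real.coe_toNNReal _ (by linarith), ← hddef,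
          abs_of_nonneg (by linarith)]
        linarith
      rw [← himg] at hv
      obtain ⟨y, hy, hyv⟩ := hv
      have hyd : infDist y C = r + d / 2 := by
        have h1 : ((Metric.infNndist y C : ℝ≥0) : ℝ) = ((Real.toNNReal (r + d/2) : ℝ≥0) : ℝ) :=
          congrArg NNReal.toReal hyv
        rwa [Metric.coe_infNndist, Real.coe_toNNReal _ (by linarith)] at h1
      have hya : r + d/2 ≤ dist y a := hyd ▸ infDist_le_dist_of_mem ha
      have hyb : r + d/2 ≤ dist y b := hyd ▸ infDist_le_dist_of_mem hb
      have hym : dist y m < r := Metric.mem_ball.mp hy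
      have hid := combo_sq y a b hαβ
      rw [dist_eq_norm] at hya hyb hym
      rw [← hmdef, ← hsdef] at hid
      have h1 : ‖y - m‖^2 < r^2 := by nlinarith [norm_nonneg (y - m)]
      rw [hid] at h1
      have hrd2 : (0:ℝ) ≤ r + d/2 := by linarith
      have h2 : (r + d/2)^2 ≤ ‖y - a‖^2 := by nlinarith [hya, hrd2]
      have h3 : (r + d/2)^2 ≤ ‖y - b‖^2 := by nlinarith [hyb, hrd2]
      have p2 := mul_le_mul_of_nonneg_left h2 hα
      have p3 := mul_le_mul_of_nonneg_left h3 hβ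
      have hsum : α*(r+d/2)^2 + β*(r+d/2)^2 = (r+d/2)^2 := by
        rw [← add_mul, hαβ, one_mul]
      have hq4 : (0:ℝ) ≤ 1/4 - α*β := by nlinarith [sq_nonneg (α - β)]
      have hq : (0:ℝ) ≤ (1/4 - α*β) * s := mul_nonneg hq4 hs0
      clear hyv himg hsub hid hym hya hyb hyd hy hm hmdef hddef hsdef hrdef
      nlinarith [h1, p2, p3, hsum, hq, hrd, hd, hs0]
    · -- empty interior
      by_contra h
      obtain ⟨x, hx⟩ := Set.nonempty_iff_ne_empty.mpr h
      obtain ⟨ε, hε, hball⟩ := Metric.isOpen_iff.mp isOpen_interior x hx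
      have himg := hsub x ε hε
      have hx0 : infDist x C = 0 := infDist_zero_of_mem (interior_subset hx)
      have hv : Real.toNNReal (ε/2) ∈ Metric.ball ((fun x => Metric.infNndist x C) x) ε := by
        rw [Metric.mem_ball, NNReal.dist_eq, Metric.coe_infNndist, hx0, sub_zero,
          Real.coe_toNNReal _ (by positivity), abs_of_nonneg (by positivity)]
        linarith
      rw [← himg] at hv
      obtain ⟨y, hy, hyv⟩ := hv
      have hy0 : infDist y C = 0 := infDist_zero_of_mem (interior_subset (hball hy))
      have : (0:ℝ) = ε/2 := by
        have h1 : ((Metric.infNndist y C : ℝ≥0) : ℝ) = ((Real.toNNReal (ε/2) : ℝ≥0) : ℝ) :=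
          congrArg NNReal.toReal hyv
        rwa [Metric.coe_infNndist, hy0, Real.coe_toNNReal _ (by positivity)] at h1
      linarith
  · rintro ⟨hconv, hint⟩ x r hr
    apply Set.Subset.antisymm
    · rintro v ⟨y, hy, rfl⟩
      rw [Metric.mem_ball] at hy ⊢
      calc dist (Metric.infNndist y C) (Metric.infNndist x C) ≤ dist y x := by
            simpa using (lipschitz_infNndist_pt C).dist_le_mul y x
        _ < r := hy
    · intro v hv
      rw [Metric.mem_ball, NNReal.dist_eq, Metric.coe_infNndist] at hv
      obtain ⟨hv1, hv2⟩ := abs_lt.mp hv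
      rcases le_or_gt (v : ℝ) (infDist x C) with hcase | hcase
      · obtain ⟨y, hdy, hiy⟩ := down_lem hC hne x v.coe_nonneg hcase
        refine ⟨y, ?_, ?_⟩
        · rw [Metric.mem_ball, dist_comm, hdy]; linarith
        · have : ((Metric.infNndist y C : ℝ≥0) : ℝ) = (v : ℝ) := by
            rw [Metric.coe_infNndist, hiy]
          exact NNReal.coe_injective this
      · obtain ⟨y, hdy, hiy⟩ := up_lem hconv hC hne hint x
          (t := (v : ℝ) - infDist x C) (by linarith)
        refine ⟨y, ?_, ?_⟩
        · rw [Metric.mem_ball, dist_comm, hdy]; linarith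
        · have : ((Metric.infNndist y C : ℝ≥0) : ℝ) = (v : ℝ) := by
            rw [Metric.coe_infNndist, hiy]; ring
          exact NNReal.coe_injective this
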